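/- arXiv:1701.08249 — 3 statements merged into one kernel-verified Lean document; each statement's English description precedes it below -/
import Mathlib

section
/- Suppose the inequality sup{∫_Ω e^{32π² u²} dx : u ∈ H₀²(Ω), ‖Δu‖₂² − α‖u‖₂² ≤ 1} < ∞ holds for every α ∈ [0, λ₁(Ω)). Then for every polynomial q(t) = 1 + a₁ t + ⋯ + a_k t^k with 0 ≤ a₁ < λ₁(Ω) and 0 ≤ a_{j+1} ≤ λ₁(Ω) a_j for 1 ≤ j ≤ k−1, one has sup{∫_Ω e^{32π² q(‖u‖₂²) u²} dx : u ∈ H₀²(Ω), ‖Δu‖₂ ≤ 1} < ∞. -/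
open MeasureTheory Real Filter Set

noncomputable section

abbrev E4 := EuclideanSpace ℝ (Fin 4)

/-- The (classical) Laplacian on `ℝ⁴`. -/
def lap (f : E4 → ℝ) (x : E4) : ℝ :=
  ∑ i : Fin 4, fderiv ℝ (fun y => fderiv ℝ f y (EuclideanSpace.single i 1)) x
    (EuclideanSpace.single i 1)

/-- Smooth functions compactly supported in `Ω` (a dense subspace of `H₀²(Ω)`). -/
def Adm (Ω : Set E4) (f : E4 → ℝ) : Prop :=
  ContDiff ℝ (⊤ : ℕ∞) f ∧ HasCompactSupport f ∧ tsupport f ⊆ Ω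

/-- The first eigenvalue of the bi-Laplacian `Δ²` on `Ω` with Dirichlet condition. -/
def lam1 (Ω : Set E4) : ℝ :=
  sInf {r | ∃ f, Adm Ω f ∧ (∫ x, (f x) ^ 2) ≠ 0 ∧
    r = (∫ x, (lap f x) ^ 2) / ∫ x, (f x) ^ 2}

lemma lap_const_mul (c : ℝ) {f : E4 → ℝ} (hf : ContDiff ℝ (⊤ : ℕ∞) f) (x : E4) :
    lap (fun y => c * f y) x = c * lap f x := by
  have hdf : Differentiable ℝ f := hf.differentiable (by simp)
  have hfd : ∀ v : E4, Differentiable ℝ (fun y => fderiv ℝ f y v) := fun v =>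
    ((hf.fderiv_right (m := (⊤ : ℕ∞)) (by norm_cast)).differentiable
      (by simp)).clm_apply (differentiable_const v)
  unfold lap
  rw [Finset.mul_sum]
  refine Finset.sum_congr rfl fun i _ => ?_
  have h1 : (fun y => fderiv ℝ (fun z => c * f z) y (EuclideanSpace.single i 1))
      = fun y => c * fderiv ℝ f y (EuclideanSpace.single i 1) := by
    funext y
    rw [fderiv_const_mul (hdf y)]
    simp
  rw [h1, fderiv_const_mul (hfd _ x)]
  simp

/-- The Rayleigh-quotient set is bounded below by 0. -/
lemma lam1_bdd (Ω : Set E4) : BddBelow {r | ∃ f, Adm Ω f ∧ (∫ x, (f x) ^ 2) ≠ 0 ∧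
    r = (∫ x, (lap f x) ^ 2) / ∫ x, (f x) ^ 2} := by
  refine ⟨0, fun r hr => ?_⟩
  obtain ⟨f, -, -, rfl⟩ := hr
  exact div_nonneg (integral_nonneg fun x => sq_nonneg _)
    (integral_nonneg fun x => sq_nonneg _)

lemma lam1_mul_le (Ω : Set E4) {f : E4 → ℝ} (hf : Adm Ω f) :
    lam1 Ω * ∫ x, (f x) ^ 2 ≤ ∫ x, (lap f x) ^ 2 := by
  have ht0 : 0 ≤ ∫ x, (f x) ^ 2 := integral_nonneg fun x => sq_nonneg _
  rcases eq_or_lt_of_le ht0 with h | h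
  · rw [← h, mul_zero]; exact integral_nonneg fun x => sq_nonneg _
  · have hmem : (∫ x, (lap f x) ^ 2) / ∫ x, (f x) ^ 2 ∈ {r | ∃ f, Adm Ω f ∧
        (∫ x, (f x) ^ 2) ≠ 0 ∧ r = (∫ x, (lap f x) ^ 2) / ∫ x, (f x) ^ 2} :=
      ⟨f, hf, h.ne', rfl⟩
    have h1 : lam1 Ω ≤ (∫ x, (lap f x) ^ 2) / ∫ x, (f x) ^ 2 :=
      csInf_le (lam1_bdd Ω) hmem
    calc lam1 Ω * ∫ x, (f x) ^ 2
        ≤ ((∫ x, (lap f x) ^ 2) / ∫ x, (f x) ^ 2) * ∫ x, (f x) ^ 2 :=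
          mul_le_mul_of_nonneg_right h1 ht0
      _ = ∫ x, (lap f x) ^ 2 := div_mul_cancel₀ _ h.ne'

/-- Proposition 1.2: the Tintarev-type Adams inequality
(finiteness of `sup ∫_Ω e^{32π²u²}` over `‖Δu‖₂² − α‖u‖₂² ≤ 1`, for every
`α ∈ [0, λ₁(Ω))`) implies the Adimurthi–Druet/Lu–Yang type Adams inequality
(finiteness of `sup ∫_Ω e^{32π² q(‖u‖₂²)u²}` over `‖Δu‖₂ ≤ 1`). -/
theorem stmt4 (Ω : Set E4) (hΩo : IsOpen Ω) (hΩne : Ω.Nonempty)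
    (hΩb : Bornology.IsBounded Ω)
    (H : ∀ α : ℝ, 0 ≤ α → α < lam1 Ω → ∃ C : ℝ, ∀ f : E4 → ℝ, Adm Ω f →
      (∫ x, (lap f x) ^ 2) - α * ∫ x, (f x) ^ 2 ≤ 1 →
      (∫ x in Ω, Real.exp (32 * π ^ 2 * (f x) ^ 2)) ≤ C) :
    ∀ (k : ℕ) (a : ℕ → ℝ), 1 ≤ k →
      (∀ j, 1 ≤ j → j ≤ k → 0 ≤ a j) → a 1 < lam1 Ω →
      (∀ j, 1 ≤ j → j + 1 ≤ k → a (j + 1) ≤ lam1 Ω * a j) →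
      ∃ C : ℝ, ∀ f : E4 → ℝ, Adm Ω f → (∫ x, (lap f x) ^ 2) ≤ 1 →
        (∫ x in Ω, Real.exp (32 * π ^ 2 *
          (1 + ∑ j ∈ Finset.range k, a (j + 1) * (∫ y, (f y) ^ 2) ^ (j + 1)) *
          (f x) ^ 2)) ≤ C := by
  intro k a hk ha ha1 hrec
  have ha1' : 0 ≤ a 1 := ha 1 le_rfl hk
  have hlp : 0 < lam1 Ω := lt_of_le_of_lt ha1' ha1
  set L := lam1 Ω with hL
  have hden : 0 < L + k * a 1 := by positivity
  set α := ((k : ℝ) + 1) * a 1 * L / (L + k * a 1) with hαdef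
  have hα0 : 0 ≤ α := by positivity
  have hαid : α * (L + k * a 1) = ((k : ℝ) + 1) * a 1 * L :=
    div_mul_cancel₀ _ hden.ne'
  have hαlt : α < L := by
    rw [hαdef, div_lt_iff₀ hden]
    nlinarith [mul_pos hlp hlp, Nat.cast_nonneg (α := ℝ) k]
  obtain ⟨C, hC⟩ := H α hα0 hαlt
  refine ⟨C, fun f hf hΔ => ?_⟩
  set t := ∫ y, (f y) ^ 2 with htdef
  have ht0 : 0 ≤ t := integral_nonneg fun x => sq_nonneg _
  have hΔ0 : 0 ≤ ∫ x, (lap f x) ^ 2 := integral_nonneg fun x => sq_nonneg _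
  have hlt : L * t ≤ 1 := le_trans (lam1_mul_le Ω hf) hΔ
  -- coefficient bound
  have hcoef : ∀ j, j < k → a (j + 1) ≤ L ^ j * a 1 := by
    intro j
    induction j with
    | zero => intro _; simp
    | succ n ih =>
      intro hjk
      have h1 : a (n + 1 + 1) ≤ L * a (n + 1) := hrec (n + 1) (by omega) (by omega)
      have h2 : a (n + 1) ≤ L ^ n * a 1 := ih (by omega)
      calc a (n + 1 + 1) ≤ L * a (n + 1) := h1
        _ ≤ L * (L ^ n * a 1) := mul_le_mul_of_nonneg_left h2 hlp.le
        _ = L ^ (n + 1) * a 1 := by ring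
  set S := ∑ j ∈ Finset.range k, a (j + 1) * t ^ (j + 1) with hSdef
  set Sg := ∑ j ∈ Finset.range k, (L * t) ^ j with hSgdef
  have hS0 : 0 ≤ S := Finset.sum_nonneg fun j hj =>
    mul_nonneg (ha (j + 1) (by omega) (by simpa using Finset.mem_range.mp hj))
      (pow_nonneg ht0 _)
  have hSle : S ≤ a 1 * t * Sg := by
    rw [hSdef, hSgdef, Finset.mul_sum]
    refine Finset.sum_le_sum fun j hj => ?_
    calc a (j + 1) * t ^ (j + 1)
        ≤ (L ^ j * a 1) * t ^ (j + 1) :=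
          mul_le_mul_of_nonneg_right (hcoef j (Finset.mem_range.mp hj))
            (pow_nonneg ht0 _)
      _ = a 1 * t * (L * t) ^ j := by rw [mul_pow]; ring
  have hSg1 : Sg * (1 - L * t) ≤ 1 := by
    have hg := geom_sum_mul (L * t) k
    have : (0:ℝ) ≤ (L * t) ^ k := pow_nonneg (mul_nonneg hlp.le ht0) k
    nlinarith
  have hSgk : Sg ≤ (k : ℝ) := by
    calc Sg ≤ ∑ _j ∈ Finset.range k, (1:ℝ) :=
        Finset.sum_le_sum fun j _ => pow_le_one₀ (mul_nonneg hlp.le ht0) hlt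
      _ = k := by simp
  have hSg0 : 0 ≤ Sg := Finset.sum_nonneg fun j _ =>
    pow_nonneg (mul_nonneg hlp.le ht0) j
  have h1mαt : 0 ≤ 1 - α * t := by
    have := mul_le_mul_of_nonneg_right hαlt.le ht0
    linarith
  -- the key scalar inequality
  have hB : t * (L - α) * L ≤ L - α := by
    nlinarith [mul_le_mul_of_nonneg_right hlt (sub_nonneg.2 hαlt.le)]
  have hC1 : a 1 * (Sg * (1 - L * t)) ≤ a 1 :=
    le_trans (mul_le_mul_of_nonneg_left hSg1 ha1') (le_of_eq (mul_one _))
  have hC2 : a 1 * Sg * (t * (L - α)) ≤ a 1 * k * (t * (L - α)) := by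
    have h3 : 0 ≤ t * (L - α) := mul_nonneg ht0 (sub_nonneg.2 hαlt.le)
    exact mul_le_mul_of_nonneg_right (mul_le_mul_of_nonneg_left hSgk ha1') h3
  have hA : a 1 * Sg * (1 - α * t) * L ≤ α * L := by
    nlinarith [mul_le_mul_of_nonneg_right hC1 hlp.le,
      mul_le_mul_of_nonneg_right hC2 hlp.le,
      mul_le_mul_of_nonneg_left hB (mul_nonneg ha1' (Nat.cast_nonneg (α := ℝ) k))]
  have hA' : a 1 * Sg * (1 - α * t) ≤ α :=
    le_of_mul_le_mul_right (by linarith [hA]) hlp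
  have hkey : (1 + S) * (1 - α * t) ≤ 1 := by
    have h5 : S * (1 - α * t) ≤ a 1 * t * Sg * (1 - α * t) :=
      mul_le_mul_of_nonneg_right hSle h1mαt
    have h6 : t * (a 1 * Sg * (1 - α * t)) ≤ t * α :=
      mul_le_mul_of_nonneg_left hA' ht0
    nlinarith
  -- the rescaled function
  have hQ0 : (0:ℝ) ≤ 1 + S := by linarith
  set c := Real.sqrt (1 + S) with hcdef
  have hc2 : c ^ 2 = 1 + S := Real.sq_sqrt hQ0
  set g : E4 → ℝ := fun y => c * f y with hgdef
  have hgAdm : Adm Ω g := by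
    refine ⟨contDiff_const.mul hf.1, ?_, ?_⟩
    · exact HasCompactSupport.mul_left hf.2.1
    · exact subset_trans (closure_mono (Function.support_mul_subset_right _ _)) hf.2.2
  have hglap : ∀ x, lap g x = c * lap f x := fun x => lap_const_mul c hf.1 x
  have hgint1 : ∫ x, (lap g x) ^ 2 = (1 + S) * ∫ x, (lap f x) ^ 2 := by
    simp only [hglap, mul_pow, hc2]
    exact integral_const_mul _ _
  have hgint2 : ∫ x, (g x) ^ 2 = (1 + S) * t := by
    rw [htdef]
    simp only [hgdef, mul_pow, hc2]
    exact integral_const_mul _ _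
  have hcond : (∫ x, (lap g x) ^ 2) - α * ∫ x, (g x) ^ 2 ≤ 1 := by
    rw [hgint1, hgint2]
    have : (1 + S) * (∫ x, (lap f x) ^ 2) - α * ((1 + S) * t)
        = (1 + S) * ((∫ x, (lap f x) ^ 2) - α * t) := by ring
    rw [this]
    calc (1 + S) * ((∫ x, (lap f x) ^ 2) - α * t)
        ≤ (1 + S) * (1 - α * t) := mul_le_mul_of_nonneg_left (by linarith) hQ0
      _ ≤ 1 := hkey
  have hfinal := hC g hgAdm hcond
  have heq : ∀ x, 32 * π ^ 2 * (1 + S) * (f x) ^ 2 = 32 * π ^ 2 * (g x) ^ 2 := by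
    intro x
    simp only [hgdef, mul_pow, hc2]
    ring
  calc (∫ x in Ω, Real.exp (32 * π ^ 2 * (1 + S) * (f x) ^ 2))
      = ∫ x in Ω, Real.exp (32 * π ^ 2 * (g x) ^ 2) := by simp only [heq]
    _ ≤ C := hfinal
end
end

section
/- Let φ(x) = (1/(16π²)) ln(1/(1 + (π/√6)|x|²)) on ℝ⁴. Then ∫_{B_R(0)} |Δφ|² dx = (1/(16π²)) ln(1 + (π/√6) R²) + 1/(96π²) + O(R^{−2}) as R → ∞; equivalently, ∫_{B_R(0)} |Δφ|² dx = (1/(8π²)) ln R + (1/(16π²)) ln(π/√6) + 1/(96π²) + O(R^{−2}). -/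
open MeasureTheory Real Filter Set

noncomputable section

/-! ### Auxiliary lemmas -/

section Aux

variable {a c : ℝ}

lemma hasFDerivAt_phi (ha : 0 < a) (x : E4) :
    HasFDerivAt (fun y : E4 => -(c * Real.log (1 + a * ‖y‖^2)))
      ((-(2*a*c) / (1 + a * ‖x‖^2)) • (innerSL ℝ x)) x := by
  have hu : (0:ℝ) < 1 + a * ‖x‖^2 := by positivity
  have h0 : HasFDerivAt (fun y : E4 => ‖y‖^2) ((2:ℕ) • (innerSL ℝ x)) x :=
    (hasStrictFDerivAt_norm_sq x).hasFDerivAt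
  have h1 := (h0.const_mul a).const_add 1
  have h4 := ((h1.log hu.ne').const_mul c).neg
  have Deq : -(c • (1 + a * ‖x‖^2)⁻¹ • a • (2:ℕ) • (innerSL ℝ x))
      = (-(2*a*c) / (1 + a * ‖x‖^2)) • (innerSL ℝ x) := by
    ext y
    simp only [ContinuousLinearMap.neg_apply, ContinuousLinearMap.smul_apply, smul_eq_mul,
      nsmul_eq_mul, Nat.cast_ofNat]
    field_simp
  exact Deq ▸ h4

lemma fderiv_phi_apply (ha : 0 < a) (x : E4) (i : Fin 4) :
    fderiv ℝ (fun y : E4 => -(c * Real.log (1 + a * ‖y‖^2))) x (EuclideanSpace.single i 1)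
      = (-(2*a*c)) * (x i * (1 + a * ‖x‖^2)⁻¹) := by
  rw [(hasFDerivAt_phi ha x).fderiv]
  simp only [ContinuousLinearMap.smul_apply, innerSL_apply_apply, smul_eq_mul]
  rw [EuclideanSpace.inner_single_right]
  simp [div_eq_mul_inv]
  ring

lemma hasFDerivAt_inner_part (ha : 0 < a) (x : E4) (i : Fin 4) :
    HasFDerivAt (fun y : E4 => (-(2*a*c)) * (y i * (1 + a * ‖y‖^2)⁻¹))
      ((-(2*a*c)) • ((x i) • ((-((1 + a * ‖x‖^2) ^ 2)⁻¹) • (a • (2:ℕ) • (innerSL ℝ x)))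
        + ((1 + a * ‖x‖^2)⁻¹) • (EuclideanSpace.proj i : E4 →L[ℝ] ℝ))) x := by
  have hu : (0:ℝ) < 1 + a * ‖x‖^2 := by positivity
  have h0 : HasFDerivAt (fun y : E4 => ‖y‖^2) ((2:ℕ) • (innerSL ℝ x)) x :=
    (hasStrictFDerivAt_norm_sq x).hasFDerivAt
  have h1 := (h0.const_mul a).const_add 1
  have hinv : HasFDerivAt (fun y : E4 => (1 + a * ‖y‖^2)⁻¹)
      ((-((1 + a * ‖x‖^2) ^ 2)⁻¹) • (a • (2:ℕ) • (innerSL ℝ x))) x :=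
    (hasDerivAt_inv hu.ne').comp_hasFDerivAt x h1
  have hp : HasFDerivAt (fun y : E4 => y i) (EuclideanSpace.proj i : E4 →L[ℝ] ℝ) x :=
    (EuclideanSpace.proj i : E4 →L[ℝ] ℝ).hasFDerivAt
  exact (hp.mul hinv).const_mul _

lemma lap_phi (ha : 0 < a) (x : E4) :
    lap (fun y : E4 => c * Real.log (1 / (1 + a * ‖y‖^2))) x
      = -4*a*c*(2 + a*‖x‖^2) / (1 + a*‖x‖^2)^2 := by
  have hu : (0:ℝ) < 1 + a * ‖x‖^2 := by positivity
  have hfun : (fun y : E4 => c * Real.log (1 / (1 + a * ‖y‖^2)))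
      = fun y : E4 => -(c * Real.log (1 + a * ‖y‖^2)) := by
    funext y
    rw [one_div, Real.log_inv]; ring
  rw [lap, hfun]
  have key : ∀ i : Fin 4,
      fderiv ℝ (fun y => fderiv ℝ (fun z : E4 => -(c * Real.log (1 + a * ‖z‖^2))) y
          (EuclideanSpace.single i 1)) x (EuclideanSpace.single i 1)
        = (-(2*a*c)) * ((x i) * ((-((1 + a * ‖x‖^2) ^ 2)⁻¹) * (a * (2 * (x i))))
            + ((1 + a * ‖x‖^2)⁻¹)) := by
    intro i
    have hfun2 : (fun y => fderiv ℝ (fun z : E4 => -(c * Real.log (1 + a * ‖z‖^2))) y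
        (EuclideanSpace.single i 1))
        = fun y : E4 => (-(2*a*c)) * (y i * (1 + a * ‖y‖^2)⁻¹) := by
      funext y
      exact fderiv_phi_apply ha y i
    rw [hfun2, (hasFDerivAt_inner_part ha x i).fderiv]
    simp only [ContinuousLinearMap.smul_apply, ContinuousLinearMap.add_apply,
      ContinuousLinearMap.neg_apply, smul_eq_mul, nsmul_eq_mul, Nat.cast_ofNat,
      innerSL_apply_apply]
    rw [EuclideanSpace.inner_single_right]
    simp [EuclideanSpace.proj, PiLp.proj_apply]
  rw [Finset.sum_congr rfl (fun i _ => key i)]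
  have hnorm : ∑ i : Fin 4, (x i)^2 = ‖x‖^2 := by
    rw [EuclideanSpace.norm_eq, Real.sq_sqrt]
    · simp [sq]
    · positivity
  rw [← Finset.mul_sum]
  rw [Finset.sum_add_distrib]
  simp only [Finset.sum_const, Finset.card_univ, Fintype.card_fin, nsmul_eq_mul]
  have : ∑ i : Fin 4, x i * (-((1 + a * ‖x‖ ^ 2) ^ 2)⁻¹ * (a * (2 * x i)))
      = (-((1 + a * ‖x‖ ^ 2) ^ 2)⁻¹ * (a * 2)) * ∑ i : Fin 4, (x i)^2 := by
    rw [Finset.mul_sum]; congr 1; funext i; ring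
  rw [this, hnorm]
  field_simp
  ring

/-- integrand -/
def Gf (a c r : ℝ) : ℝ := (-4*a*c*(2+a*r^2) / (1+a*r^2)^2)^2

/-- antiderivative of `r^3 * Gf a c r` -/
def Ff (a c r : ℝ) : ℝ :=
  8*c^2*(Real.log (1+a*r^2) - (1+a*r^2)⁻¹ + ((1+a*r^2)^2)⁻¹/2 + ((1+a*r^2)^3)⁻¹/3)

lemma hasDerivAt_Ff (ha : 0 < a) (r : ℝ) :
    HasDerivAt (Ff a c) (r^3 * Gf a c r) r := by
  have hu : (0:ℝ) < 1 + a * r^2 := by positivity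
  have hu' : HasDerivAt (fun s : ℝ => 1 + a * s^2) (a * (2*r)) r := by
    simpa using ((hasDerivAt_pow 2 r).const_mul a).const_add 1
  have hlog : HasDerivAt (fun s : ℝ => Real.log (1 + a * s^2))
      ((1 + a*r^2)⁻¹ * (a * (2*r))) r := by
    have := (Real.hasDerivAt_log hu.ne').comp r hu'; exact this
  have hinv : HasDerivAt (fun s : ℝ => (1 + a * s^2)⁻¹)
      (-((1 + a*r^2)^2)⁻¹ * (a * (2*r))) r := (hasDerivAt_inv hu.ne').comp r hu'
  have hu2 : HasDerivAt (fun s : ℝ => (1 + a * s^2)^2)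
      ((2:ℕ) * (1 + a*r^2)^1 * (a * (2*r))) r := hu'.pow 2
  have hu3 : HasDerivAt (fun s : ℝ => (1 + a * s^2)^3)
      ((3:ℕ) * (1 + a*r^2)^2 * (a * (2*r))) r := hu'.pow 3
  have hinv2 : HasDerivAt (fun s : ℝ => ((1 + a * s^2)^2)⁻¹)
      (-(((1 + a*r^2)^2)^2)⁻¹ * ((2:ℕ) * (1 + a*r^2)^1 * (a * (2*r)))) r :=
    (hasDerivAt_inv (by positivity)).comp r hu2
  have hinv3 : HasDerivAt (fun s : ℝ => ((1 + a * s^2)^3)⁻¹)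
      (-(((1 + a*r^2)^3)^2)⁻¹ * ((3:ℕ) * (1 + a*r^2)^2 * (a * (2*r)))) r :=
    (hasDerivAt_inv (by positivity)).comp r hu3
  have h := (((hlog.sub hinv).add (hinv2.div_const 2)).add (hinv3.div_const 3)).const_mul
    (8*c^2)
  refine h.congr_deriv ?_
  simp only [Gf]
  field_simp
  ring

lemma vol_ball_one : (volume (Metric.ball (0:E4) 1)).toReal = π^2 / 2 := by
  rw [EuclideanSpace.volume_ball]
  have h3 : ((Fintype.card (Fin 4) : ℝ) / 2 + 1) = 3 := by simp; norm_num
  rw [h3]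
  have : Real.Gamma 3 = 2 := by
    have := Real.Gamma_nat_eq_factorial 2
    norm_num at this
    convert this using 2
    norm_num
  rw [this]
  have hs : Real.sqrt π ^ Fintype.card (Fin 4) = π ^ 2 := by
    simp [Fintype.card_fin]
    rw [show (4:ℕ) = 2*2 from rfl, pow_mul, Real.sq_sqrt Real.pi_pos.le]
  rw [hs]
  simp [ENNReal.toReal_ofReal (by positivity : (0:ℝ) ≤ π^2/2)]

lemma ball_integral (a c R : ℝ) :
    ∫ x in Metric.ball (0:E4) R, Gf a c ‖x‖
      = 2*π^2 * ∫ r in Ioo (0:ℝ) R, r^3 * Gf a c r := by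
  have key := MeasureTheory.integral_fun_norm_addHaar (volume : Measure E4)
    ((Iio R).indicator (Gf a c))
  have h1 : ∫ x : E4, (Iio R).indicator (Gf a c) ‖x‖
      = ∫ x in Metric.ball (0:E4) R, Gf a c ‖x‖ := by
    rw [← integral_indicator measurableSet_ball]
    congr 1
    funext x
    by_cases hx : x ∈ Metric.ball (0:E4) R
    · rw [indicator_of_mem hx, indicator_of_mem (by simpa [mem_ball_zero_iff] using hx)]
    · rw [indicator_of_notMem hx, indicator_of_notMem (by simpa [mem_ball_zero_iff] using hx)]
  rw [h1] at key
  rw [key]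
  have h2 : ∫ y in Ioi (0:ℝ), y ^ (Module.finrank ℝ E4 - 1) • (Iio R).indicator (Gf a c) y
      = ∫ r in Ioo (0:ℝ) R, r^3 * Gf a c r := by
    have : ∀ y : ℝ, y ^ (Module.finrank ℝ E4 - 1) • (Iio R).indicator (Gf a c) y
        = (Iio R).indicator (fun r => r^3 * Gf a c r) y := by
      intro y
      by_cases hy : y ∈ Iio R
      · simp [indicator_of_mem hy]
      · simp [indicator_of_notMem hy]
    simp_rw [this]
    rw [setIntegral_indicator measurableSet_Iio]
    rw [Ioi_inter_Iio]
  rw [h2]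
  have h4 : Module.finrank ℝ E4 = 4 := by simp
  rw [h4, Measure.real, vol_ball_one]
  rw [nsmul_eq_mul, smul_eq_mul]
  push_cast
  ring

lemma ftc (a c R : ℝ) (ha : 0 < a) (h0R : 0 ≤ R) :
    ∫ r in Ioo (0:ℝ) R, r^3 * Gf a c r = Ff a c R - Ff a c 0 := by
  have hcont : Continuous fun r : ℝ => r^3 * Gf a c r := by
    apply Continuous.mul (by continuity)
    unfold Gf
    apply Continuous.pow
    apply Continuous.div (by continuity) (by continuity)
    intro r; positivity
  rw [← MeasureTheory.integral_Ioc_eq_integral_Ioo,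
    ← intervalIntegral.integral_of_le h0R]
  exact intervalIntegral.integral_eq_sub_of_hasDerivAt
    (fun r _ => hasDerivAt_Ff ha r) (hcont.intervalIntegrable 0 R)

lemma Ff_zero (a c : ℝ) : Ff a c 0 = -(8*c^2)/6 := by
  simp [Ff]; ring

end Aux

theorem stmt16 :
    ∃ C : ℝ, ∀ R : ℝ, 1 ≤ R →
      |(∫ x in Metric.ball (0 : E4) R,
          (lap (fun y : E4 =>
            (1 / (16 * π ^ 2)) *
              Real.log (1 / (1 + (π / Real.sqrt 6) * ‖y‖ ^ 2))) x) ^ 2) -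
        ((1 / (16 * π ^ 2)) * Real.log (1 + (π / Real.sqrt 6) * R ^ 2) +
          1 / (96 * π ^ 2))| ≤ C / R ^ 2 ∧
      |(∫ x in Metric.ball (0 : E4) R,
          (lap (fun y : E4 =>
            (1 / (16 * π ^ 2)) *
              Real.log (1 / (1 + (π / Real.sqrt 6) * ‖y‖ ^ 2))) x) ^ 2) -
        ((1 / (8 * π ^ 2)) * Real.log R +
          (1 / (16 * π ^ 2)) * Real.log (π / Real.sqrt 6) +
          1 / (96 * π ^ 2))| ≤ C / R ^ 2 := by
  set a : ℝ := π / Real.sqrt 6 with ha_def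
  set c : ℝ := 1 / (16 * π ^ 2) with hc_def
  have hπ : (0:ℝ) < π := Real.pi_pos
  have ha : 0 < a := by
    rw [ha_def]
    positivity
  have hc : 0 < c := by rw [hc_def]; positivity
  refine ⟨2 * c / a, fun R hR => ?_⟩
  have hR0 : (0:ℝ) < R := lt_of_lt_of_le one_pos hR
  -- the integral computation
  have hI : (∫ x in Metric.ball (0 : E4) R,
      (lap (fun y : E4 => c * Real.log (1 / (1 + a * ‖y‖ ^ 2))) x) ^ 2)
      = 2*π^2 * (Ff a c R - Ff a c 0) := by
    have hpt : ∀ x : E4,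
        (lap (fun y : E4 => c * Real.log (1 / (1 + a * ‖y‖ ^ 2))) x) ^ 2 = Gf a c ‖x‖ := by
      intro x
      rw [lap_phi ha x, Gf]
    calc (∫ x in Metric.ball (0 : E4) R,
        (lap (fun y : E4 => c * Real.log (1 / (1 + a * ‖y‖ ^ 2))) x) ^ 2)
        = ∫ x in Metric.ball (0 : E4) R, Gf a c ‖x‖ :=
          integral_congr_ae (Eventually.of_forall fun x => hpt x)
      _ = 2*π^2 * ∫ r in Ioo (0:ℝ) R, r^3 * Gf a c r := ball_integral a c R
      _ = 2*π^2 * (Ff a c R - Ff a c 0) := by rw [ftc a c R ha hR0.le]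
  set U : ℝ := 1 + a * R^2 with hU_def
  have hU1 : (1:ℝ) ≤ U := by
    rw [hU_def]; nlinarith [mul_pos ha (by positivity : (0:ℝ) < R^2)]
  have hU0 : (0:ℝ) < U := lt_of_lt_of_le one_pos hU1
  have haR : 0 < a * R^2 := by positivity
  have hUaR : a * R^2 ≤ U := by rw [hU_def]; linarith
  have h16 : 16 * π^2 * c^2 = c := by
    rw [hc_def]; field_simp
  have hIval : (∫ x in Metric.ball (0 : E4) R,
      (lap (fun y : E4 => c * Real.log (1 / (1 + a * ‖y‖ ^ 2))) x) ^ 2)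
      = c * Real.log U + c/6 + c * (-(U⁻¹) + ((U^2)⁻¹)/2 + ((U^3)⁻¹)/3) := by
    rw [hI, Ff_zero]
    rw [Ff]
    rw [← hU_def]
    linear_combination (Real.log U - U⁻¹ + (U^2)⁻¹/2 + (U^3)⁻¹/3 + 1/6) * h16
  have hc6 : (1 / (96 * π ^ 2) : ℝ) = c / 6 := by rw [hc_def]; ring
  have h8 : (1 / (8 * π ^ 2) : ℝ) = 2 * c := by rw [hc_def]; ring
  set s : ℝ := -(U⁻¹) + ((U^2)⁻¹)/2 + ((U^3)⁻¹)/3 with hs_def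
  have hs : |s| ≤ U⁻¹ := by
    have h2 : (U^2)⁻¹ ≤ U⁻¹ := by
      apply inv_anti₀ hU0; nlinarith
    have h3 : (U^3)⁻¹ ≤ U⁻¹ := by
      apply inv_anti₀ hU0; nlinarith
    have hp2 : 0 < (U^2)⁻¹ := by positivity
    have hp3 : 0 < (U^3)⁻¹ := by positivity
    rw [abs_le, hs_def]
    constructor
    · linarith
    · linarith
  have hUinv : U⁻¹ ≤ (a*R^2)⁻¹ := inv_anti₀ haR hUaR
  have hb1 : |c * s| ≤ c / a / R^2 := by
    rw [abs_mul, abs_of_pos hc]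
    calc c * |s| ≤ c * U⁻¹ := by
          exact mul_le_mul_of_nonneg_left hs hc.le
      _ ≤ c * (a*R^2)⁻¹ := mul_le_mul_of_nonneg_left hUinv hc.le
      _ = c / a / R^2 := by field_simp
  have ht0 : (0:ℝ) < (a*R^2)⁻¹ := by positivity
  have hlogt : 0 ≤ Real.log (1 + (a*R^2)⁻¹) ∧
      Real.log (1 + (a*R^2)⁻¹) ≤ (a*R^2)⁻¹ := by
    constructor
    · exact Real.log_nonneg (by linarith)
    · have := Real.log_le_sub_one_of_pos (show (0:ℝ) < 1 + (a*R^2)⁻¹ by linarith)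
      linarith
  have hb2 : |c * Real.log (1 + (a*R^2)⁻¹)| ≤ c / a / R^2 := by
    rw [abs_mul, abs_of_pos hc, abs_of_nonneg hlogt.1]
    calc c * Real.log (1 + (a*R^2)⁻¹) ≤ c * (a*R^2)⁻¹ :=
          mul_le_mul_of_nonneg_left hlogt.2 hc.le
      _ = c / a / R^2 := by field_simp
  have hlogU : Real.log U = Real.log a + 2 * Real.log R + Real.log (1 + (a*R^2)⁻¹) := by
    have hUeq : U = (a * R^2) * (1 + (a*R^2)⁻¹) := by
      rw [hU_def]; field_simp; ring
    rw [hUeq, Real.log_mul haR.ne' (by positivity), Real.log_mul ha.ne' (by positivity),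
      Real.log_pow]
    push_cast
    ring
  have hpos : (0:ℝ) ≤ c / a / R^2 := by positivity
  constructor
  · rw [hIval]
    have e : (c * Real.log U + c/6 + c * s) -
        (c * Real.log U + 1 / (96 * π ^ 2)) = c * s := by
      rw [hc6]; ring
    rw [e]
    calc |c * s| ≤ c / a / R^2 := hb1
      _ ≤ 2 * c / a / R^2 := by
          rw [show (2:ℝ) * c / a / R^2 = c / a / R^2 + c / a / R^2 by ring]
          linarith
  · rw [hIval]
    have e : (c * Real.log U + c/6 + c * s) -
        (1 / (8 * π ^ 2) * Real.log R + c * Real.log a + 1 / (96 * π ^ 2))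
        = c * s + c * Real.log (1 + (a*R^2)⁻¹) := by
      rw [hc6, h8, hlogU]; ring
    rw [e]
    calc |c * s + c * Real.log (1 + (a*R^2)⁻¹)|
        ≤ |c * s| + |c * Real.log (1 + (a*R^2)⁻¹)| := abs_add_le _ _
      _ ≤ c / a / R^2 + c / a / R^2 := add_le_add hb1 hb2
      _ = 2 * c / a / R^2 := by ring
end
end

section
/- Suppose u ∈ C⁴(closure of Ω′) solves Δ²u = f(u) on a smooth bounded domain Ω′ ⊂ ℝ⁴, let F(u) = ∫₀^u f(s) ds and v = −Δu. Then for any y ∈ ℝ⁴: 4∫_{Ω′} F(u) dx = ∫_{∂Ω′} ⟨x−y, ν⟩ F(u) dω + (1/2)∫_{∂Ω′} v² ⟨x−y, ν⟩ dω + 2∫_{∂Ω′} (∂u/∂ν) v dω + ∫_{∂Ω′} ( (∂v/∂ν)⟨x−y, ∇u⟩ + (∂u/∂ν)⟨x−y, ∇v⟩ − ⟨∇u, ∇v⟩⟨x−y, ν⟩ ) dω, where ν is the outward unit normal on ∂Ω′. -/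
open MeasureTheory Real Filter Set

noncomputable section

/-- Divergence of a vector field on `ℝ⁴`. -/
def divg (F : E4 → E4) (x : E4) : ℝ :=
  ∑ i : Fin 4, fderiv ℝ F x (EuclideanSpace.single i 1) i

section PohozaevAux
open InnerProductSpace

local notation "ee" i => EuclideanSpace.single i (1:ℝ)

lemma sum_smul_single (w : E4) : ∑ i : Fin 4, w i • (ee i) = w := by
  have := (EuclideanSpace.basisFun (Fin 4) ℝ).toBasis.sum_repr w
  simpa [EuclideanSpace.basisFun_apply, EuclideanSpace.basisFun_repr] using this

lemma comp_apply_E4 (w : E4) (i : Fin 4) : w i = @inner ℝ _ _ w (ee i) := by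
  simp [EuclideanSpace.inner_single_right]

lemma grad_eq (g : E4 → ℝ) (x : E4) :
    gradient g x = (toDual ℝ E4).symm (fderiv ℝ g x) := rfl

lemma inner_grad (g : E4 → ℝ) (x w : E4) :
    (inner ℝ (gradient g x) w : ℝ) = fderiv ℝ g x w := by
  rw [grad_eq, toDual_symm_apply]

section
variable {c : E4 → ℝ} {W F G : E4 → E4} {x y : E4} {g u : E4 → ℝ}

lemma divg_add (hF : DifferentiableAt ℝ F x) (hG : DifferentiableAt ℝ G x) :
    divg (fun z => F z + G z) x = divg F x + divg G x := by
  unfold divg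
  rw [← Finset.sum_add_distrib]
  congr 1; ext i
  rw [fderiv_fun_add hF hG]
  simp

lemma divg_smul (hc : DifferentiableAt ℝ c x) (hW : DifferentiableAt ℝ W x) :
    divg (fun z => c z • W z) x = c x * divg W x + fderiv ℝ c x (W x) := by
  unfold divg
  have h := (hc.hasFDerivAt.smul hW.hasFDerivAt).fderiv
  rw [show (fun z => c z • W z) = c • W from rfl, h]
  simp only [ContinuousLinearMap.add_apply, ContinuousLinearMap.smul_apply,
    ContinuousLinearMap.smulRight_apply, PiLp.add_apply, PiLp.smul_apply, smul_eq_mul]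
  rw [Finset.sum_add_distrib]
  congr 1
  · rw [Finset.mul_sum]
  · calc ∑ i : Fin 4, (fderiv ℝ c x (ee i)) * W x i
        = ∑ i : Fin 4, fderiv ℝ c x (W x i • (ee i)) := by
          congr 1; ext i; rw [_root_.map_smul]; simp [mul_comm]
      _ = fderiv ℝ c x (W x) := by rw [← map_sum, sum_smul_single]

lemma divg_sub_const : divg (fun z => z - y) x = 4 := by
  unfold divg
  have : fderiv ℝ (fun z : E4 => z - y) x = ContinuousLinearMap.id ℝ E4 := by
    rw [fderiv_sub_const, fderiv_id']
  rw [this]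
  simp [EuclideanSpace.single_apply]

end
section
variable {g : E4 → ℝ} {x : E4}

lemma contDiff_gradient {n : ℕ∞} (hg : ContDiff ℝ (n+1) g) : ContDiff ℝ n (gradient g) := by
  have : gradient g = fun x => (toDual ℝ E4).symm (fderiv ℝ g x) := rfl
  rw [this]
  exact ((toDual ℝ E4).symm.toContinuousLinearEquiv : (E4 →L[ℝ] ℝ) ≃L[ℝ] E4).contDiff.comp
    (hg.fderiv_right le_rfl)

lemma fderiv_fderiv_apply (hg : ContDiff ℝ 2 g) (w a : E4) :
    fderiv ℝ (fun z => fderiv ℝ g z w) x a = fderiv ℝ (fderiv ℝ g) x a w := by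
  have hdf : DifferentiableAt ℝ (fderiv ℝ g) x :=
    ((hg.fderiv_right (le_refl 2) : ContDiff ℝ 1 (fderiv ℝ g)).differentiable (by norm_num)) x
  rw [fderiv_clm_apply hdf (differentiableAt_const w)]
  simp

lemma inner_fderiv_grad (hg : ContDiff ℝ 2 g) (a b : E4) :
    (inner ℝ (fderiv ℝ (gradient g) x a) b : ℝ) = fderiv ℝ (fderiv ℝ g) x a b := by
  have hgrad : DifferentiableAt ℝ (gradient g) x :=
    ((contDiff_gradient (n := 1) (hg.of_le (by norm_num))).differentiable (by norm_num)) x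
  have h1 := fderiv_inner_apply (𝕜 := ℝ) hgrad (differentiableAt_const b) a
  simp only [fderiv_const, fderiv_const_apply, Pi.zero_apply, ContinuousLinearMap.zero_apply,
    inner_zero_right, zero_add] at h1
  rw [← h1]
  have e : (fun z => (inner ℝ (gradient g z) b : ℝ)) = fun z => fderiv ℝ g z b :=
    funext fun z => inner_grad g z b
  rw [e, fderiv_fderiv_apply hg]

lemma snd_symm (hg : ContDiff ℝ 2 g) (a b : E4) :
    fderiv ℝ (fderiv ℝ g) x a b = fderiv ℝ (fderiv ℝ g) x b a := by
  have hdf : DifferentiableAt ℝ (fderiv ℝ g) x :=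
    ((hg.fderiv_right (le_refl 2) : ContDiff ℝ 1 (fderiv ℝ g)).differentiable (by norm_num)) x
  exact second_derivative_symmetric
    (fun z => ((hg.differentiable (by norm_num)) z).hasFDerivAt) hdf.hasFDerivAt a b

lemma divg_gradient (hg : ContDiff ℝ 2 g) : divg (gradient g) x = lap g x := by
  unfold divg lap
  congr 1; ext i
  rw [comp_apply_E4 (fderiv ℝ (gradient g) x (EuclideanSpace.single i 1)) i,
    inner_fderiv_grad hg, ← fderiv_fderiv_apply hg]

lemma lap_eq_sum (hg : ContDiff ℝ 2 g) :
    lap g x = ∑ i : Fin 4, fderiv ℝ (fderiv ℝ g) x (ee i) (ee i) := by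
  unfold lap
  congr 1; ext i
  exact fderiv_fderiv_apply hg _ _

lemma contDiff_lap (hg : ContDiff ℝ 4 g) : ContDiff ℝ 2 (lap g) := by
  have h1 : ContDiff ℝ 3 (fderiv ℝ g) := hg.fderiv_right (by norm_num)
  have h2 : ContDiff ℝ 2 (fderiv ℝ (fderiv ℝ g)) := h1.fderiv_right (by norm_num)
  have : lap g = fun x => ∑ i : Fin 4, fderiv ℝ (fderiv ℝ g) x (ee i) (ee i) :=
    funext fun x => lap_eq_sum (hg.of_le (by norm_num))
  rw [this]
  exact ContDiff.sum fun i _ => (h2.clm_apply contDiff_const).clm_apply contDiff_const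

lemma lap_neg (hg : ContDiff ℝ 2 g) : lap (fun z => -(g z)) x = -(lap g x) := by
  unfold lap
  rw [← Finset.sum_neg_distrib]
  congr 1; ext i
  have h1 : (fun y => fderiv ℝ (fun z => -(g z)) y (ee i))
      = fun y => -(fderiv ℝ g y (ee i)) := by
    ext z; rw [fderiv_fun_neg]; simp
  rw [h1, fderiv_fun_neg]
  simp

end
lemma hasDerivAt_Fc {f : ℝ → ℝ} (hf : Continuous f) (t : ℝ) :
    HasDerivAt (fun r => ∫ s in (0:ℝ)..r, f s) (f t) t :=
  intervalIntegral.integral_hasDerivAt_right (hf.intervalIntegrable _ _)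
    (hf.stronglyMeasurable.stronglyMeasurableAtFilter) hf.continuousAt

lemma contDiff_Fc {f : ℝ → ℝ} (hf : Continuous f) :
    ContDiff ℝ 1 (fun r => ∫ s in (0:ℝ)..r, f s) := by
  rw [contDiff_one_iff_deriv]
  constructor
  · exact fun t => (hasDerivAt_Fc hf t).differentiableAt
  · have : deriv (fun r => ∫ s in (0:ℝ)..r, f s) = f :=
      funext fun t => (hasDerivAt_Fc hf t).deriv
    rw [this]; exact hf

section
variable {u : E4 → ℝ} {f : ℝ → ℝ}

lemma divg_G (hu : ContDiff ℝ 4 u) (hf : Continuous f) (y x : E4) :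
    divg (fun z =>
      ((∫ s in (0:ℝ)..(u z), f s) + (lap u z)^2/2
          - (inner ℝ (gradient u z) (gradient (fun w => -(lap u w)) z) : ℝ)) • (z - y)
      + ((2 * (-(lap u z)) + (inner ℝ (z - y) (gradient (fun w => -(lap u w)) z) : ℝ)) • gradient u z
        + (inner ℝ (z - y) (gradient u z) : ℝ) • gradient (fun w => -(lap u w)) z)) x
    = 4 * (∫ s in (0:ℝ)..(u x), f s)
      + (f (u x) + lap (fun w => -(lap u w)) x) * (inner ℝ (x - y) (gradient u x) : ℝ) := by
  -- abbreviations
  set V : E4 → ℝ := fun w => -(lap u w) with hV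
  have hu2 : ContDiff ℝ 2 u := hu.of_le (by norm_num)
  have hlapc : ContDiff ℝ 2 (lap u) := contDiff_lap hu
  have hVc : ContDiff ℝ 2 V := hlapc.neg
  have hGu : ContDiff ℝ 1 (gradient u) := contDiff_gradient (n := 1) (hu.of_le (by norm_num))
  have hGV : ContDiff ℝ 1 (gradient V) := contDiff_gradient (n := 1) hVc
  have hu_d : DifferentiableAt ℝ u x := (hu.differentiable (by norm_num)) x
  have hGu_d : DifferentiableAt ℝ (gradient u) x := (hGu.differentiable (by norm_num)) x
  have hGV_d : DifferentiableAt ℝ (gradient V) x := (hGV.differentiable (by norm_num)) x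
  have hlap_d : DifferentiableAt ℝ (lap u) x := (hlapc.differentiable (by norm_num)) x
  have hV_d : DifferentiableAt ℝ V x := hlap_d.neg
  have hid_d : DifferentiableAt ℝ (fun z : E4 => z - y) x :=
    differentiableAt_id.sub_const y
  have hfid : fderiv ℝ (fun z : E4 => z - y) x = ContinuousLinearMap.id ℝ E4 := by
    rw [fderiv_sub_const, fderiv_id']
  -- scalar pieces
  have hc1 : HasFDerivAt (fun z => ∫ s in (0:ℝ)..(u z), f s)
      (f (u x) • fderiv ℝ u x) x := by
    exact (hasDerivAt_Fc hf (u x)).comp_hasFDerivAt x hu_d.hasFDerivAt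
  have hc2 : HasFDerivAt (fun z => (lap u z)^2/2) ((lap u x) • fderiv ℝ (lap u) x) x := by
    have h0 : HasDerivAt (fun t : ℝ => t^2/2) (lap u x) (lap u x) := by
      simpa using (hasDerivAt_pow 2 (lap u x)).div_const 2
    exact h0.comp_hasFDerivAt x hlap_d.hasFDerivAt
  have hc3_d : DifferentiableAt ℝ
      (fun z => (inner ℝ (gradient u z) (gradient V z) : ℝ)) x :=
    hGu_d.inner ℝ hGV_d
  have hc4_d : DifferentiableAt ℝ
      (fun z => 2 * V z + (inner ℝ (z - y) (gradient V z) : ℝ)) x :=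
    (hV_d.const_mul 2).add (hid_d.inner ℝ hGV_d)
  have hc5_d : DifferentiableAt ℝ (fun z => (inner ℝ (z - y) (gradient u z) : ℝ)) x :=
    hid_d.inner ℝ hGu_d
  have hc123_d : DifferentiableAt ℝ (fun z =>
      (∫ s in (0:ℝ)..(u z), f s) + (lap u z)^2/2
        - (inner ℝ (gradient u z) (gradient V z) : ℝ)) x :=
    (hc1.differentiableAt.add hc2.differentiableAt).sub hc3_d
  -- step 1: split divergence
  have step1 : divg (fun z =>
      ((∫ s in (0:ℝ)..(u z), f s) + (lap u z)^2/2
          - (inner ℝ (gradient u z) (gradient V z) : ℝ)) • (z - y)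
      + ((2 * V z + (inner ℝ (z - y) (gradient V z) : ℝ)) • gradient u z
        + (inner ℝ (z - y) (gradient u z) : ℝ) • gradient V z)) x
      = (((∫ s in (0:ℝ)..(u x), f s) + (lap u x)^2/2
          - (inner ℝ (gradient u x) (gradient V x) : ℝ)) * divg (fun z : E4 => z - y) x
        + fderiv ℝ (fun z =>
            (∫ s in (0:ℝ)..(u z), f s) + (lap u z)^2/2
              - (inner ℝ (gradient u z) (gradient V z) : ℝ)) x (x - y))
      + (((2 * V x + (inner ℝ (x - y) (gradient V x) : ℝ)) * divg (gradient u) x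
          + fderiv ℝ (fun z => 2 * V z + (inner ℝ (z - y) (gradient V z) : ℝ)) x (gradient u x))
        + ((inner ℝ (x - y) (gradient u x) : ℝ) * divg (gradient V) x
          + fderiv ℝ (fun z => (inner ℝ (z - y) (gradient u z) : ℝ)) x (gradient V x))) := by
    rw [divg_add (hc123_d.fun_smul hid_d)
        ((hc4_d.fun_smul hGu_d).fun_add (hc5_d.fun_smul hGV_d)),
      divg_add (hc4_d.fun_smul hGu_d) (hc5_d.fun_smul hGV_d),
      divg_smul hc123_d hid_d, divg_smul hc4_d hGu_d, divg_smul hc5_d hGV_d]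
  -- value lemmas
  have hA : ∀ w, fderiv ℝ u x w = (inner ℝ (x - y) (gradient u x) : ℝ) ∨ True := fun _ => Or.inr trivial
  have hlapf : ∀ w : E4, fderiv ℝ (lap u) x w = -(inner ℝ (gradient V x) w : ℝ) := by
    intro w
    have h0 : fderiv ℝ V x = -fderiv ℝ (lap u) x := by
      rw [hV]; exact fderiv_fun_neg
    have h2 : (inner ℝ (gradient V x) w : ℝ) = fderiv ℝ V x w := inner_grad V x w
    rw [h2, h0]; simp
  have hD2u := inner_fderiv_grad (x := x) hu2
  have hD2V := inner_fderiv_grad (x := x) hVc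
  have hSu := snd_symm (x := x) hu2
  have hSV := snd_symm (x := x) hVc
  set p := x - y with hp
  set A := (inner ℝ p (gradient u x) : ℝ) with hA2
  set B := (inner ℝ p (gradient V x) : ℝ) with hB2
  set C := (inner ℝ (gradient u x) (gradient V x) : ℝ) with hC2
  set Su := fderiv ℝ (fderiv ℝ u) x (gradient V x) p with hSu2
  set Sv := fderiv ℝ (fderiv ℝ V) x (gradient u x) p with hSv2
  have e123 : fderiv ℝ (fun z =>
      (∫ s in (0:ℝ)..(u z), f s) + (lap u z)^2/2
        - (inner ℝ (gradient u z) (gradient V z) : ℝ)) x p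
      = f (u x) * A - lap u x * B - (Sv + Su) := by
    rw [fderiv_fun_sub (hc1.differentiableAt.fun_add hc2.differentiableAt) hc3_d,
      fderiv_fun_add hc1.differentiableAt hc2.differentiableAt, hc1.fderiv, hc2.fderiv]
    simp only [ContinuousLinearMap.sub_apply, ContinuousLinearMap.add_apply,
      ContinuousLinearMap.smul_apply, smul_eq_mul]
    rw [fderiv_inner_apply (𝕜 := ℝ) hGu_d hGV_d p, hlapf p]
    have t1 : fderiv ℝ u x p = A := by
      rw [hA2, real_inner_comm, inner_grad]
    have t2 : (inner ℝ (gradient V x) p : ℝ) = B := by rw [hB2, real_inner_comm]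
    have t3 : (inner ℝ (gradient u x) (fderiv ℝ (gradient V) x p) : ℝ) = Sv := by
      rw [real_inner_comm, hD2V, hSV, hSv2]
    have t4 : (inner ℝ (fderiv ℝ (gradient u) x p) (gradient V x) : ℝ) = Su := by
      rw [hD2u, hSu, hSu2]
    rw [t1, t2, t3, t4]
    ring
  have e4 : fderiv ℝ (fun z => 2 * V z + (inner ℝ (z - y) (gradient V z) : ℝ)) x
      (gradient u x) = 2 * C + (Sv + C) := by
    rw [fderiv_fun_add (hV_d.const_mul 2) (hid_d.inner ℝ hGV_d)]
    simp only [ContinuousLinearMap.add_apply]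
    rw [fderiv_const_mul hV_d]
    simp only [ContinuousLinearMap.smul_apply, smul_eq_mul]
    rw [fderiv_inner_apply (𝕜 := ℝ) hid_d hGV_d]
    have t1 : fderiv ℝ V x (gradient u x) = C := by
      rw [hC2, ← inner_grad V x, real_inner_comm]
    have t2 : (inner ℝ p (fderiv ℝ (gradient V) x (gradient u x)) : ℝ) = Sv := by
      rw [real_inner_comm, hD2V, hSv2]
    have t3 : (inner ℝ (fderiv ℝ (fun z : E4 => z - y) x (gradient u x)) (gradient V x) : ℝ)
        = C := by rw [hfid]; rfl
    rw [t1, t2, t3]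
  have e5 : fderiv ℝ (fun z => (inner ℝ (z - y) (gradient u z) : ℝ)) x (gradient V x)
      = Su + C := by
    rw [fderiv_inner_apply (𝕜 := ℝ) hid_d hGu_d]
    have t1 : (inner ℝ p (fderiv ℝ (gradient u) x (gradient V x)) : ℝ) = Su := by
      rw [real_inner_comm, hD2u, hSu2]
    have t2 : (inner ℝ (fderiv ℝ (fun z : E4 => z - y) x (gradient V x)) (gradient u x) : ℝ)
        = C := by rw [hfid]; exact real_inner_comm _ _
    rw [t1, t2]
  refine step1.trans ?_
  rw [divg_sub_const, divg_gradient hu2, divg_gradient hVc, e123, e4, e5]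
  have hVx : V x = -(lap u x) := rfl
  rw [hVx]
  ring

end

lemma integrable_bd {μ : Measure E4} [IsFiniteMeasure μ] {Ω' : Set E4}
    (hΩb : Bornology.IsBounded Ω') (hμfr : μ (frontier Ω')ᶜ = 0)
    {g : E4 → ℝ} (hg : Continuous g) : Integrable g μ := by
  have hb : Bornology.IsBounded (frontier Ω') :=
    hΩb.closure.subset frontier_subset_closure
  have hK : IsCompact (frontier Ω') :=
    Metric.isCompact_of_isClosed_isBounded isClosed_frontier hb
  obtain ⟨CC, hC⟩ := hK.exists_bound_of_continuousOn hg.continuousOn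
  refine (integrable_const CC).mono' hg.aestronglyMeasurable ?_
  rw [ae_iff]
  refine measure_mono_null ?_ hμfr
  intro x hx
  intro hmem
  exact hx (hC x hmem)


end PohozaevAux

/-- Pohozaev identity, Lemma 3.5: if `u ∈ C⁴` solves `Δ²u = f(u)`
on a smooth bounded domain `Ω′`, then with `F(u) = ∫₀^u f`, `v = −Δu`, boundary
measure `ω` on `∂Ω′` and outward unit normal `ν` (characterized through the
divergence theorem), for any `y ∈ ℝ⁴`:
`4∫_{Ω′} F(u) = ∫_{∂Ω′} ⟨x−y,ν⟩F(u) + ½∫ v²⟨x−y,ν⟩ + 2∫ (∂u/∂ν)v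
 + ∫ ((∂v/∂ν)⟨x−y,∇u⟩ + (∂u/∂ν)⟨x−y,∇v⟩ − ⟨∇u,∇v⟩⟨x−y,ν⟩)`. -/
theorem stmt18 (Ω' : Set E4) (hΩo : IsOpen Ω') (hΩb : Bornology.IsBounded Ω')
    (μ : Measure E4) [IsFiniteMeasure μ] (hμfr : μ (frontier Ω')ᶜ = 0)
    (ν : E4 → E4) (hν : Continuous ν) (hνn : ∀ x ∈ frontier Ω', ‖ν x‖ = 1)
    (hdiv : ∀ F : E4 → E4, ContDiff ℝ 1 F →
      (∫ x in Ω', divg F x) = ∫ x, (inner ℝ (F x) (ν x) : ℝ) ∂μ)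
    (u : E4 → ℝ) (hu : ContDiff ℝ 4 u) (f : ℝ → ℝ) (hf : Continuous f)
    (heq : ∀ x ∈ Ω', lap (lap u) x = f (u x)) (y : E4) :
    4 * (∫ x in Ω', (∫ s in (0:ℝ)..(u x), f s)) =
      (∫ x, (inner ℝ (x - y) (ν x) : ℝ) * (∫ s in (0:ℝ)..(u x), f s) ∂μ)
      + (1 / 2) * (∫ x, (-(lap u x)) ^ 2 * (inner ℝ (x - y) (ν x) : ℝ) ∂μ)
      + 2 * (∫ x, (inner ℝ (gradient u x) (ν x) : ℝ) * (-(lap u x)) ∂μ)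
      + ∫ x,
          ((inner ℝ (gradient (fun z => -(lap u z)) x) (ν x) : ℝ) *
              (inner ℝ (x - y) (gradient u x) : ℝ)
            + (inner ℝ (gradient u x) (ν x) : ℝ) *
              (inner ℝ (x - y) (gradient (fun z => -(lap u z)) x) : ℝ)
            - (inner ℝ (gradient u x) (gradient (fun z => -(lap u z)) x) : ℝ) *
              (inner ℝ (x - y) (ν x) : ℝ)) ∂μ := by
  -- the Pohozaev vector field
  set G : E4 → E4 := fun z =>
    ((∫ s in (0:ℝ)..(u z), f s) + (lap u z)^2/2
        - (inner ℝ (gradient u z) (gradient (fun w => -(lap u w)) z) : ℝ)) • (z - y)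
    + ((2 * (-(lap u z)) + (inner ℝ (z - y) (gradient (fun w => -(lap u w)) z) : ℝ)) • gradient u z
      + (inner ℝ (z - y) (gradient u z) : ℝ) • gradient (fun w => -(lap u w)) z) with hG
  -- continuity facts
  have hlapc : ContDiff ℝ 2 (lap u) := contDiff_lap hu
  have hVc : ContDiff ℝ 2 (fun w => -(lap u w)) := hlapc.neg
  have hGu : ContDiff ℝ 1 (gradient u) := contDiff_gradient (n := 1) (hu.of_le (by norm_num))
  have hGV : ContDiff ℝ 1 (gradient (fun w => -(lap u w))) := contDiff_gradient (n := 1) hVc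
  have hFcu : ContDiff ℝ 1 (fun z => ∫ s in (0:ℝ)..(u z), f s) :=
    (contDiff_Fc hf).comp (hu.of_le (by norm_num))
  have hGC : ContDiff ℝ 1 G := by
    rw [hG]
    refine ContDiff.add (ContDiff.fun_smul ?_ ?_) (ContDiff.add (ContDiff.fun_smul ?_ ?_)
      (ContDiff.fun_smul ?_ ?_))
    · exact (hFcu.add (((hlapc.of_le one_le_two).pow 2).div_const 2)).sub
        (ContDiff.inner ℝ hGu hGV)
    · exact contDiff_id.sub contDiff_const
    · exact (contDiff_const.mul (hlapc.of_le one_le_two).neg).add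
        (ContDiff.inner ℝ (contDiff_id.sub contDiff_const) hGV)
    · exact hGu
    · exact ContDiff.inner ℝ (contDiff_id.sub contDiff_const) hGu
    · exact hGV
  have key := hdiv G hGC
  -- interior computation
  have hlhs : (∫ x in Ω', divg G x)
      = 4 * ∫ x in Ω', (∫ s in (0:ℝ)..(u x), f s) := by
    have hcg : EqOn (fun x => divg G x)
        (fun x => 4 * (∫ s in (0:ℝ)..(u x), f s)) Ω' := by
      intro x hx
      show divg G x = _
      rw [hG]
      rw [divg_G hu hf y x]
      have hlapV : lap (fun w => -(lap u w)) x = -(f (u x)) := by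
        rw [lap_neg hlapc, heq x hx]
      rw [hlapV]
      ring
    rw [setIntegral_congr_fun hΩo.measurableSet hcg, integral_const_mul]
  -- boundary integrands
  set s1 : E4 → ℝ := fun x =>
    (inner ℝ (x - y) (ν x) : ℝ) * (∫ s in (0:ℝ)..(u x), f s) with hs1
  set s2 : E4 → ℝ := fun x =>
    (-(lap u x)) ^ 2 * (inner ℝ (x - y) (ν x) : ℝ) with hs2
  set s3 : E4 → ℝ := fun x =>
    (inner ℝ (gradient u x) (ν x) : ℝ) * (-(lap u x)) with hs3
  set s4 : E4 → ℝ := fun x =>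
    (inner ℝ (gradient (fun z => -(lap u z)) x) (ν x) : ℝ) *
        (inner ℝ (x - y) (gradient u x) : ℝ)
      + (inner ℝ (gradient u x) (ν x) : ℝ) *
        (inner ℝ (x - y) (gradient (fun z => -(lap u z)) x) : ℝ)
      - (inner ℝ (gradient u x) (gradient (fun z => -(lap u z)) x) : ℝ) *
        (inner ℝ (x - y) (ν x) : ℝ) with hs4
  have hpt : ∀ x, (inner ℝ (G x) (ν x) : ℝ)
      = s1 x + ((1/2) * s2 x + (2 * s3 x + s4 x)) := by
    intro x
    rw [hG, hs1, hs2, hs3, hs4]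
    simp only [inner_add_left, real_inner_smul_left]
    ring
  -- continuity of the integrands
  have hc1 : Continuous s1 := by
    rw [hs1]
    exact (Continuous.inner (continuous_id.sub continuous_const) hν).mul hFcu.continuous
  have hc2 : Continuous s2 := by
    rw [hs2]
    exact (hlapc.continuous.neg.pow 2).mul
      (Continuous.inner (continuous_id.sub continuous_const) hν)
  have hc3 : Continuous s3 := by
    rw [hs3]
    exact (Continuous.inner hGu.continuous hν).mul hlapc.continuous.neg
  have hc4 : Continuous s4 := by
    rw [hs4]
    exact (((Continuous.inner hGV.continuous hν).mul
        (Continuous.inner (continuous_id.sub continuous_const) hGu.continuous)).add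
      ((Continuous.inner hGu.continuous hν).mul
        (Continuous.inner (continuous_id.sub continuous_const) hGV.continuous))).sub
      ((Continuous.inner hGu.continuous hGV.continuous).mul
        (Continuous.inner (continuous_id.sub continuous_const) hν))
  have i1 : Integrable s1 μ := integrable_bd hΩb hμfr hc1
  have i2 : Integrable (fun x => (1/2) * s2 x) μ :=
    (integrable_bd hΩb hμfr hc2).const_mul _
  have i3 : Integrable (fun x => 2 * s3 x) μ :=
    (integrable_bd hΩb hμfr hc3).const_mul _
  have i4 : Integrable s4 μ := integrable_bd hΩb hμfr hc4
  have hrhs : (∫ x, (inner ℝ (G x) (ν x) : ℝ) ∂μ)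
      = (∫ x, s1 x ∂μ) + ((1/2) * (∫ x, s2 x ∂μ)
        + (2 * (∫ x, s3 x ∂μ) + ∫ x, s4 x ∂μ)) := by
    have e : (fun x => (inner ℝ (G x) (ν x) : ℝ))
        = fun x => s1 x + ((1/2) * s2 x + (2 * s3 x + s4 x)) := funext hpt
    have i34 : Integrable (fun x => 2 * s3 x + s4 x) μ := by exact i3.add i4
    have i234 : Integrable (fun x => (1/2) * s2 x + (2 * s3 x + s4 x)) μ := by
      exact i2.add i34
    rw [e]
    rw [integral_add i1 i234]
    have A2 : (∫ x, ((1/2) * s2 x + (2 * s3 x + s4 x)) ∂μ)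
        = (∫ x, (1/2) * s2 x ∂μ) + ∫ x, (2 * s3 x + s4 x) ∂μ := integral_add i2 i34
    have A3 : (∫ x, (2 * s3 x + s4 x) ∂μ)
        = (∫ x, 2 * s3 x ∂μ) + ∫ x, s4 x ∂μ := integral_add i3 i4
    rw [A2, A3, integral_const_mul, integral_const_mul]
  rw [← hlhs, key, hrhs]
  ring
end
end
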